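/- arXiv:2012.00152 — 4 statements merged into one kernel-verified Lean document; each statement's English description precedes it below -/
import Mathlib

section
/- Let w : [0,T] → ℝ^d solve the gradient flow w'(t) = -∇L(w(t)) with L(w) = ∑_{i=1}^m ℓ(y_i, f(w,x_i)) as above. Then for any query x, f(w(T), x) = f(w(0), x) - ∑_{i=1}^m ∫_0^T ℓ'(y_i, f(w(t), x_i)) · K_{w(t)}(x, x_i) dt, where K_v is the tangent kernel of f at parameter v. In particular the learned model equals the initial model plus a sum over training examples of loss-weighted path-kernel terms. -/
open scoped BigOperators
open InnerProductSpace

set_option maxHeartbeats 1000000 in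
theorem path_kernel_representation (d n m : ℕ)
    (f : EuclideanSpace ℝ (Fin d) → EuclideanSpace ℝ (Fin n) → ℝ)
    (hf : ∀ x, ContDiff ℝ 1 (fun w => f w x))
    (ℓ ℓ' : ℝ → ℝ → ℝ)
    (hℓ : ∀ a b, HasDerivAt (fun y => ℓ a y) (ℓ' a b) b)
    (hℓ' : ∀ a, Continuous (ℓ' a))
    (x : Fin m → EuclideanSpace ℝ (Fin n)) (y : Fin m → ℝ)
    (L : EuclideanSpace ℝ (Fin d) → ℝ)
    (hL : L = fun v => ∑ i, ℓ (y i) (f v (x i)))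
    (T : ℝ) (hT : 0 ≤ T)
    (w : ℝ → EuclideanSpace ℝ (Fin d))
    (hw : ∀ t ∈ Set.Icc (0 : ℝ) T, HasDerivAt w (-(gradient L (w t))) t)
    (xq : EuclideanSpace ℝ (Fin n)) :
    f (w T) xq = f (w 0) xq -
      ∑ i, ∫ t in (0 : ℝ)..T, ℓ' (y i) (f (w t) (x i)) *
        (inner ℝ (gradient (fun v => f v xq) (w t))
               (gradient (fun v => f v (x i)) (w t)) : ℝ) := by
  obtain ⟨g, hg⟩ : ∃ g : EuclideanSpace ℝ (Fin n) → EuclideanSpace ℝ (Fin d) → EuclideanSpace ℝ (Fin d),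
      g = fun x' v => gradient (fun u => f u x') v := ⟨_, rfl⟩
  -- each f(·,x') has gradient g x' v at every v
  have hgrad : ∀ x' v, HasGradientAt (fun u => f u x') (g x' v) v := by
    rw [hg]; exact fun x' v => (((hf x').differentiable one_ne_zero) v).hasGradientAt
  -- gradient of L
  have hgradL : ∀ v, gradient L v = ∑ i, ℓ' (y i) (f v (x i)) • g (x i) v := by
    intro v
    have hfd : HasFDerivAt L
        (∑ i, ℓ' (y i) (f v (x i)) • (InnerProductSpace.toDual ℝ _ (g (x i) v) : _ →L[ℝ] ℝ)) v := by
      rw [hL]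
      exact HasFDerivAt.fun_sum fun i _ =>
        (hℓ (y i) (f v (x i))).comp_hasFDerivAt v ((hgrad (x i) v).hasFDerivAt)
    have : HasGradientAt L (∑ i, ℓ' (y i) (f v (x i)) • g (x i) v) v := by
      rw [hasGradientAt_iff_hasFDerivAt, map_sum]
      simpa [map_smul] using hfd
    exact this.gradient
  -- continuity of v ↦ g x' v
  have hgcont : ∀ x', Continuous (g x') := by
    intro x'
    have h1 : Continuous (fderiv ℝ (fun u => f u x')) := (hf x').continuous_fderiv one_ne_zero
    have : Continuous (fun v => (InnerProductSpace.toDual ℝ (EuclideanSpace ℝ (Fin d))).symm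
        (fderiv ℝ (fun u => f u x') v)) :=
      (LinearIsometryEquiv.continuous _).comp h1
    rw [hg]
    simpa [gradient] using this
  -- w continuous on Icc
  have hwc : ContinuousOn w (Set.Icc 0 T) := fun t ht =>
    (hw t ht).continuousAt.continuousWithinAt
  -- integrand continuity
  have hIcont : ∀ i : Fin m, ContinuousOn (fun t => ℓ' (y i) (f (w t) (x i)) *
      (inner ℝ (g xq (w t)) (g (x i) (w t)) : ℝ)) (Set.Icc 0 T) := by
    intro i
    apply ContinuousOn.mul
    · exact ((hℓ' (y i)).comp ((hf (x i)).continuous)).comp_continuousOn hwc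
    · exact (continuous_inner.comp (((hgcont xq).prodMk (hgcont (x i))))).comp_continuousOn hwc
  have hInt : ∀ i : Fin m, IntervalIntegrable (fun t => ℓ' (y i) (f (w t) (x i)) *
      (inner ℝ (g xq (w t)) (g (x i) (w t)) : ℝ)) MeasureTheory.volume 0 T := fun i =>
    ((hIcont i).mono (by rw [Set.uIcc_of_le hT])).intervalIntegrable
  -- derivative of t ↦ f (w t) xq
  have hderiv : ∀ t ∈ Set.uIcc (0:ℝ) T, HasDerivAt (fun t => f (w t) xq)
      (-(∑ i, ℓ' (y i) (f (w t) (x i)) * (inner ℝ (g xq (w t)) (g (x i) (w t)) : ℝ))) t := by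
    intro t ht
    rw [Set.uIcc_of_le hT] at ht
    have h1 : HasDerivAt (fun t => f (w t) xq)
        ((InnerProductSpace.toDual ℝ _ (g xq (w t))) (-(gradient L (w t)))) t :=
      ((hgrad xq (w t)).hasFDerivAt).comp_hasDerivAt t (hw t ht)
    convert h1 using 1
    rw [hgradL (w t)]
    simp only [InnerProductSpace.toDual_apply_apply, inner_neg_right, inner_sum, real_inner_smul_right]
  have hIntSum := IntervalIntegrable.sum Finset.univ (fun i _ => hInt i)
  have hIntAll : IntervalIntegrable (fun t => -(∑ i, ℓ' (y i) (f (w t) (x i)) *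
      (inner ℝ (g xq (w t)) (g (x i) (w t)) : ℝ))) MeasureTheory.volume 0 T := by
    convert hIntSum.neg using 1
    funext t
    simp [Finset.sum_apply]
  have key := intervalIntegral.integral_eq_sub_of_hasDerivAt hderiv hIntAll
  rw [intervalIntegral.integral_neg, intervalIntegral.integral_finset_sum (fun i _ => hInt i)] at key
  rw [hg] at key
  simp only at key
  linarith [key]
end

section
/- Under the hypotheses of the path-kernel representation, if moreover for each i the path kernel P_i = ∫_0^T K_{w(t)}(x, x_i) dt is nonzero, then f(w(T),x) = ∑_{i=1}^m a_i P_i + b, where a_i = -(∫_0^T ℓ'(y_i, f(w(t),x_i)) K_{w(t)}(x,x_i) dt) / P_i is the kernel-weighted average loss derivative and b = f(w(0), x). -/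
open scoped BigOperators

theorem kernel_machine_form (d n m : ℕ)
    (f : EuclideanSpace ℝ (Fin d) → EuclideanSpace ℝ (Fin n) → ℝ)
    (hf : ∀ x, ContDiff ℝ 1 (fun w => f w x))
    (ℓ ℓ' : ℝ → ℝ → ℝ)
    (hℓ : ∀ a b, HasDerivAt (fun y => ℓ a y) (ℓ' a b) b)
    (hℓ' : ∀ a, Continuous (ℓ' a))
    (x : Fin m → EuclideanSpace ℝ (Fin n)) (y : Fin m → ℝ)
    (L : EuclideanSpace ℝ (Fin d) → ℝ)
    (hL : L = fun v => ∑ i, ℓ (y i) (f v (x i)))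
    (T : ℝ) (hT : 0 ≤ T)
    (w : ℝ → EuclideanSpace ℝ (Fin d))
    (hw : ∀ t ∈ Set.Icc (0 : ℝ) T, HasDerivAt w (-(gradient L (w t))) t)
    (xq : EuclideanSpace ℝ (Fin n))
    (P : Fin m → ℝ)
    (hP : P = fun i => ∫ t in (0 : ℝ)..T,
      (inner ℝ (gradient (fun v => f v xq) (w t))
             (gradient (fun v => f v (x i)) (w t)) : ℝ))
    (hPne : ∀ i, P i ≠ 0) :
    f (w T) xq =
      ∑ i, (-(∫ t in (0 : ℝ)..T, ℓ' (y i) (f (w t) (x i)) *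
          (inner ℝ (gradient (fun v => f v xq) (w t))
                 (gradient (fun v => f v (x i)) (w t)) : ℝ)) / P i) * P i
        + f (w 0) xq := by
  classical
  -- continuity of the gradients
  have hgradcont : ∀ z : EuclideanSpace ℝ (Fin n),
      Continuous (fun v => gradient (fun u => f u z) v) := by
    intro z
    have h1 : Continuous (fun v => fderiv ℝ (fun u => f u z) v) :=
      (hf z).continuous_fderiv one_ne_zero
    exact ((InnerProductSpace.toDual ℝ (EuclideanSpace ℝ (Fin d))).symm.continuous).comp h1
  -- gradient of L
  have hgradL : ∀ v, HasGradientAt L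
      (∑ i, ℓ' (y i) (f v (x i)) • gradient (fun u => f u (x i)) v) v := by
    intro v
    rw [hasGradientAt_iff_hasFDerivAt, map_sum, hL]
    refine HasFDerivAt.fun_sum (fun i _ => ?_)
    rw [map_smul]
    exact (hℓ (y i) (f v (x i))).comp_hasFDerivAt v
      (((hf (x i)).differentiable one_ne_zero v).hasGradientAt.hasFDerivAt)
  -- derivative of t ↦ f (w t) xq
  have key : ∀ t ∈ Set.uIcc (0:ℝ) T, HasDerivAt (fun t => f (w t) xq)
      (-∑ i, ℓ' (y i) (f (w t) (x i)) *
        (inner ℝ (gradient (fun v => f v xq) (w t))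
               (gradient (fun v => f v (x i)) (w t)) : ℝ)) t := by
    intro t ht
    rw [Set.uIcc_of_le hT] at ht
    have hF : HasFDerivAt (fun v => f v xq)
        ((InnerProductSpace.toDual ℝ (EuclideanSpace ℝ (Fin d)))
          (gradient (fun v => f v xq) (w t))) (w t) :=
      ((hf xq).differentiable one_ne_zero (w t)).hasGradientAt.hasFDerivAt
    have h1 := hF.comp_hasDerivAt t (hw t ht)
    have h2 : HasDerivAt (fun t => f (w t) xq)
        ((inner ℝ (gradient (fun v => f v xq) (w t)) (-(gradient L (w t))) : ℝ)) t := by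
      simpa only [Function.comp_def, InnerProductSpace.toDual_apply_apply] using h1
    convert h2 using 1
    rw [(hgradL (w t)).gradient, inner_neg_right, inner_sum, neg_inj]
    exact Finset.sum_congr rfl fun i _ => by rw [real_inner_smul_right]
  -- continuity of w on [0,T]
  have hwc : ContinuousOn w (Set.Icc (0:ℝ) T) :=
    fun t ht => ((hw t ht).continuousAt).continuousWithinAt
  -- continuity of each summand of the integrand
  have hcont : ∀ i : Fin m, ContinuousOn (fun t => ℓ' (y i) (f (w t) (x i)) *
      (inner ℝ (gradient (fun v => f v xq) (w t))
             (gradient (fun v => f v (x i)) (w t)) : ℝ)) (Set.Icc (0:ℝ) T) := by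
    intro i
    have hfc : Continuous fun v => f v (x i) := (hf (x i)).continuous
    refine ContinuousOn.mul ?_ ?_
    · exact ((hℓ' (y i)).comp hfc).comp_continuousOn hwc
    · exact (Continuous.inner (hgradcont xq) (hgradcont (x i))).comp_continuousOn hwc
  have hii : ∀ i : Fin m, IntervalIntegrable (fun t => ℓ' (y i) (f (w t) (x i)) *
      (inner ℝ (gradient (fun v => f v xq) (w t))
             (gradient (fun v => f v (x i)) (w t)) : ℝ)) MeasureTheory.volume 0 T := by
    intro i
    apply ContinuousOn.intervalIntegrable
    rw [Set.uIcc_of_le hT]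
    exact hcont i
  have hiiTot : IntervalIntegrable (fun t => -∑ i, ℓ' (y i) (f (w t) (x i)) *
      (inner ℝ (gradient (fun v => f v xq) (w t))
             (gradient (fun v => f v (x i)) (w t)) : ℝ)) MeasureTheory.volume 0 T := by
    apply ContinuousOn.intervalIntegrable
    rw [Set.uIcc_of_le hT]
    exact (continuousOn_finset_sum _ (fun i _ => hcont i)).neg
  have hFTC := intervalIntegral.integral_eq_sub_of_hasDerivAt key hiiTot
  rw [intervalIntegral.integral_neg, intervalIntegral.integral_finset_sum (fun i _ => hii i)] at hFTC
  have hsum : ∀ i : Fin m, (-(∫ t in (0:ℝ)..T, ℓ' (y i) (f (w t) (x i)) *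
      (inner ℝ (gradient (fun v => f v xq) (w t))
             (gradient (fun v => f v (x i)) (w t)) : ℝ)) / P i) * P i
      = -(∫ t in (0:ℝ)..T, ℓ' (y i) (f (w t) (x i)) *
      (inner ℝ (gradient (fun v => f v xq) (w t))
             (gradient (fun v => f v (x i)) (w t)) : ℝ)) :=
    fun i => div_mul_cancel₀ _ (hPne i)
  rw [Finset.sum_congr rfl (fun i _ => hsum i), Finset.sum_neg_distrib]
  linarith [hFTC]
end

section
/- The loss-weighted path kernel representation: under the gradient flow setup, defining K^{lp}(x, x_i) = ∫_0^T ℓ'(y_i, f(w(t),x_i)) K_{w(t)}(x, x_i) dt, the final model satisfies f(w(T), x) = f(w(0), x) + ∑_{i=1}^m (-1)·K^{lp}(x, x_i). -/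
open scoped BigOperators

theorem loss_weighted_path_kernel_representation (d n m : ℕ)
    (f : EuclideanSpace ℝ (Fin d) → EuclideanSpace ℝ (Fin n) → ℝ)
    (hf : ∀ x, ContDiff ℝ 1 (fun w => f w x))
    (ℓ ℓ' : ℝ → ℝ → ℝ)
    (hℓ : ∀ a b, HasDerivAt (fun y => ℓ a y) (ℓ' a b) b)
    (hℓ' : ∀ a, Continuous (ℓ' a))
    (x : Fin m → EuclideanSpace ℝ (Fin n)) (y : Fin m → ℝ)
    (L : EuclideanSpace ℝ (Fin d) → ℝ)
    (hL : L = fun v => ∑ i, ℓ (y i) (f v (x i)))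
    (T : ℝ) (hT : 0 ≤ T)
    (w : ℝ → EuclideanSpace ℝ (Fin d))
    (hw : ∀ t ∈ Set.Icc (0 : ℝ) T, HasDerivAt w (-(gradient L (w t))) t)
    (xq : EuclideanSpace ℝ (Fin n))
    (Klp : Fin m → ℝ)
    (hKlp : Klp = fun i => ∫ t in (0 : ℝ)..T, ℓ' (y i) (f (w t) (x i)) *
      (inner ℝ (gradient (fun v => f v xq) (w t))
             (gradient (fun v => f v (x i)) (w t)) : ℝ)) :
    f (w T) xq = f (w 0) xq + ∑ i, (-1 : ℝ) * Klp i := by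
  classical
  have hdiff : ∀ x' (v : EuclideanSpace ℝ (Fin d)), DifferentiableAt ℝ (fun w => f w x') v :=
    fun x' v => ((hf x').differentiable one_ne_zero v)
  have hgrad : ∀ x' (v : EuclideanSpace ℝ (Fin d)), HasGradientAt (fun w => f w x')
      (gradient (fun w => f w x') v) v := fun x' v => (hdiff x' v).hasGradientAt
  -- gradient of L
  have hLgrad : ∀ v : EuclideanSpace ℝ (Fin d), gradient L v =
      ∑ i, ℓ' (y i) (f v (x i)) • gradient (fun w => f w (x i)) v := by
    intro v
    have h1 : ∀ i : Fin m, HasFDerivAt (fun v => ℓ (y i) (f v (x i)))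
        (ℓ' (y i) (f v (x i)) • (InnerProductSpace.toDual ℝ (EuclideanSpace ℝ (Fin d))
          (gradient (fun w => f w (x i)) v))) v := by
      intro i
      exact (hℓ (y i) (f v (x i))).comp_hasFDerivAt v ((hgrad (x i) v).hasFDerivAt)
    have h2 : HasFDerivAt L (∑ i, ℓ' (y i) (f v (x i)) •
        (InnerProductSpace.toDual ℝ (EuclideanSpace ℝ (Fin d))
          (gradient (fun w => f w (x i)) v))) v := by
      rw [hL]; exact HasFDerivAt.fun_sum fun i _ => h1 i
    have h3 : HasGradientAt L
        (∑ i, ℓ' (y i) (f v (x i)) • gradient (fun w => f w (x i)) v) v := by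
      rw [hasGradientAt_iff_hasFDerivAt, map_sum]
      simpa [map_smul] using h2
    exact h3.gradient
  have hwc : ContinuousOn w (Set.Icc 0 T) :=
    fun t ht => (hw t ht).continuousAt.continuousWithinAt
  have hgc : ∀ x', Continuous (fun v : EuclideanSpace ℝ (Fin d) =>
      gradient (fun w => f w x') v) := by
    intro x'
    have h := (hf x').continuous_fderiv one_ne_zero
    exact (InnerProductSpace.toDual ℝ (EuclideanSpace ℝ (Fin d))).symm.continuous.comp h
  set G : Fin m → ℝ → ℝ := fun i t => ℓ' (y i) (f (w t) (x i)) *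
      (inner ℝ (gradient (fun v => f v xq) (w t))
             (gradient (fun v => f v (x i)) (w t)) : ℝ) with hG
  have hGc : ∀ i, ContinuousOn (G i) (Set.Icc 0 T) := by
    intro i
    apply ContinuousOn.mul
    · exact (hℓ' (y i)).comp_continuousOn (((hf (x i)).continuous).comp_continuousOn hwc)
    · exact ContinuousOn.inner ((hgc xq).comp_continuousOn hwc)
        ((hgc (x i)).comp_continuousOn hwc)
  have hderiv : ∀ t ∈ Set.uIcc (0 : ℝ) T,
      HasDerivAt (fun t => f (w t) xq) (∑ i, -(G i t)) t := by
    intro t ht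
    rw [Set.uIcc_of_le hT] at ht
    have h0 : HasDerivAt (fun t => f (w t) xq)
        ((InnerProductSpace.toDual ℝ (EuclideanSpace ℝ (Fin d))
          (gradient (fun v => f v xq) (w t))) (-(gradient L (w t)))) t :=
      ((hgrad xq (w t)).hasFDerivAt).comp_hasDerivAt t (hw t ht)
    convert h0 using 1
    rw [InnerProductSpace.toDual_apply_apply, inner_neg_right, hLgrad, inner_sum]
    simp only [real_inner_smul_right, hG]
    exact Finset.sum_neg_distrib _
  have hint : IntervalIntegrable (fun t => ∑ i, -(G i t)) MeasureTheory.volume 0 T := by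
    apply ContinuousOn.intervalIntegrable
    rw [Set.uIcc_of_le hT]
    exact continuousOn_finset_sum _ fun i _ => (hGc i).neg
  have hftc := intervalIntegral.integral_eq_sub_of_hasDerivAt hderiv hint
  have hsum : (∫ t in (0:ℝ)..T, ∑ i, -(G i t)) = ∑ i, ∫ t in (0:ℝ)..T, -(G i t) := by
    apply intervalIntegral.integral_finset_sum
    intro i _
    apply ContinuousOn.intervalIntegrable
    rw [Set.uIcc_of_le hT]
    exact (hGc i).neg
  rw [hsum] at hftc
  have hK : ∀ i, (∫ t in (0:ℝ)..T, -(G i t)) = -Klp i := by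
    intro i
    rw [intervalIntegral.integral_neg, hKlp]
  simp only [hK] at hftc
  have h1 : ∑ i, (-1 : ℝ) * Klp i = ∑ i, -Klp i := by
    refine Finset.sum_congr rfl fun i _ => neg_one_mul _
  rw [h1]
  linarith [hftc]
end

section
/- If the tangent kernel is constant along the gradient flow path (K_{w(t)} = K for all t ∈ [0,T]), then the path kernel equals T·K, and the learned model is f(w(T),x) = f(w(0),x) - ∑_i (∫_0^T ℓ'(y_i, f(w(t),x_i)) dt)·K(x, x_i), i.e., an exact kernel machine in the fixed kernel K. -/
open scoped BigOperators

set_option maxHeartbeats 1000000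

theorem constant_tangent_kernel_exact_kernel_machine (d n m : ℕ)
    (f : EuclideanSpace ℝ (Fin d) → EuclideanSpace ℝ (Fin n) → ℝ)
    (hf : ∀ x, ContDiff ℝ 1 (fun w => f w x))
    (ℓ ℓ' : ℝ → ℝ → ℝ)
    (hℓ : ∀ a b, HasDerivAt (fun y => ℓ a y) (ℓ' a b) b)
    (hℓ' : ∀ a, Continuous (ℓ' a))
    (x : Fin m → EuclideanSpace ℝ (Fin n)) (y : Fin m → ℝ)
    (L : EuclideanSpace ℝ (Fin d) → ℝ)
    (hL : L = fun v => ∑ i, ℓ (y i) (f v (x i)))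
    (T : ℝ) (hT : 0 ≤ T)
    (w : ℝ → EuclideanSpace ℝ (Fin d))
    (hw : ∀ t ∈ Set.Icc (0 : ℝ) T, HasDerivAt w (-(gradient L (w t))) t)
    (K : EuclideanSpace ℝ (Fin n) → EuclideanSpace ℝ (Fin n) → ℝ)
    (hK : ∀ t ∈ Set.Icc (0 : ℝ) T, ∀ a b : EuclideanSpace ℝ (Fin n),
      (inner ℝ (gradient (fun v => f v a) (w t))
             (gradient (fun v => f v b) (w t)) : ℝ) = K a b) :
    (∀ a b : EuclideanSpace ℝ (Fin n),
      (∫ t in (0 : ℝ)..T,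
        (inner ℝ (gradient (fun v => f v a) (w t))
               (gradient (fun v => f v b) (w t)) : ℝ)) = T * K a b) ∧
    (∀ xq : EuclideanSpace ℝ (Fin n),
      f (w T) xq = f (w 0) xq -
        ∑ i, (∫ t in (0 : ℝ)..T, ℓ' (y i) (f (w t) (x i))) * K xq (x i)) := by
  have huIcc : Set.uIcc (0 : ℝ) T = Set.Icc 0 T := Set.uIcc_of_le hT
  -- gradient existence for the model
  have hfd : ∀ a (v : EuclideanSpace ℝ (Fin d)),
      HasGradientAt (fun v => f v a) (gradient (fun v => f v a) v) v :=
    fun a v => ((hf a).differentiable one_ne_zero v).hasGradientAt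
  constructor
  · intro a b
    rw [intervalIntegral.integral_congr (g := fun _ => K a b)
      (by rw [huIcc]; intro t ht; exact hK t ht a b)]
    simp
  · intro xq
    -- continuity of w on [0,T]
    have hwc : ContinuousOn w (Set.Icc 0 T) := fun t ht =>
      (hw t ht).continuousAt.continuousWithinAt
    -- gradient of L
    have hGL : ∀ (p : EuclideanSpace ℝ (Fin d)),
        gradient L p = ∑ i, ℓ' (y i) (f p (x i)) • gradient (fun v => f v (x i)) p := by
      intro p
      have hFD : HasFDerivAt L
          (∑ i, ℓ' (y i) (f p (x i)) •
            (InnerProductSpace.toDual ℝ _ (gradient (fun v => f v (x i)) p))) p := by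
        rw [hL]
        exact HasFDerivAt.fun_sum (fun i _ =>
          (hℓ (y i) (f p (x i))).comp_hasFDerivAt p (hfd (x i) p).hasFDerivAt)
      have hG : HasGradientAt L
          (∑ i, ℓ' (y i) (f p (x i)) • gradient (fun v => f v (x i)) p) p := by
        rw [hasGradientAt_iff_hasFDerivAt]
        refine hFD.congr_fderiv ?_
        simp [map_sum]
      exact hG.differentiableAt.hasGradientAt.unique hG
    -- derivative of t ↦ f (w t) xq on [0,T]
    have hderiv : ∀ t ∈ Set.Icc (0 : ℝ) T,
        HasDerivAt (fun t => f (w t) xq)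
          (-(∑ i, ℓ' (y i) (f (w t) (x i)) * K xq (x i))) t := by
      intro t ht
      have h1 : HasDerivAt (fun t => f (w t) xq)
          (InnerProductSpace.toDual ℝ _ (gradient (fun v => f v xq) (w t))
            (-(gradient L (w t)))) t :=
        (hfd xq (w t)).hasFDerivAt.comp_hasDerivAt t (hw t ht)
      convert h1 using 1
      rw [InnerProductSpace.toDual_apply_apply, inner_neg_right, hGL, inner_sum]
      congr 1
      refine Finset.sum_congr rfl fun i _ => ?_
      rw [real_inner_smul_right, hK t ht xq (x i)]
    -- integrability of each summand
    have hcont : ∀ i : Fin m, ContinuousOn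
        (fun t => ℓ' (y i) (f (w t) (x i))) (Set.Icc (0:ℝ) T) := fun i =>
      (hℓ' (y i)).comp_continuousOn ((hf (x i)).continuous.comp_continuousOn hwc)
    have hint : ∀ i : Fin m, IntervalIntegrable
        (fun t => ℓ' (y i) (f (w t) (x i))) MeasureTheory.volume 0 T := fun i =>
      ContinuousOn.intervalIntegrable (huIcc ▸ hcont i)
    have hintK : ∀ i : Fin m, IntervalIntegrable
        (fun t => ℓ' (y i) (f (w t) (x i)) * K xq (x i)) MeasureTheory.volume 0 T :=
      fun i => (hint i).mul_const _
    -- FTC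
    have hint2 : IntervalIntegrable
        (fun t => -(∑ i, ℓ' (y i) (f (w t) (x i)) * K xq (x i)))
        MeasureTheory.volume 0 T := by
      apply ContinuousOn.intervalIntegrable
      rw [huIcc]
      exact (continuousOn_finset_sum _ (fun i _ => (hcont i).mul continuousOn_const)).neg
    have hderiv' : ∀ t ∈ Set.uIcc (0:ℝ) T,
        HasDerivAt (fun t => f (w t) xq)
          (-(∑ i, ℓ' (y i) (f (w t) (x i)) * K xq (x i))) t := by
      rw [huIcc]; exact hderiv
    have hFTC : f (w T) xq - f (w 0) xq =
        ∫ t in (0:ℝ)..T, -(∑ i, ℓ' (y i) (f (w t) (x i)) * K xq (x i)) :=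
      (intervalIntegral.integral_eq_sub_of_hasDerivAt hderiv' hint2).symm
    have : f (w T) xq - f (w 0) xq =
        -∑ i, (∫ t in (0:ℝ)..T, ℓ' (y i) (f (w t) (x i))) * K xq (x i) := by
      rw [hFTC, intervalIntegral.integral_neg,
        intervalIntegral.integral_finset_sum (fun i _ => hintK i)]
      congr 1
      exact Finset.sum_congr rfl fun i _ => intervalIntegral.integral_mul_const _ _
    linarith
end
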